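/- Let f : ℝ → ℝ be twice continuously differentiable. Then M₁ and M₂ are differentiable and the identity Φ(y)·M₂'(y) + Φ'(y)·M₁'(y) = 0 holds for every y ∈ ℝ. -/

import Mathlib

open MeasureTheory Real Filter

/-- `Fa a x = ∫₀^∞ exp(-t² - 2xt) · t^a dt`, a Hermite-type function of negative degree. -/
noncomputable def Fa (a x : ℝ) : ℝ :=
  ∫ t in Set.Ioi (0 : ℝ), Real.exp (-(t ^ 2) - 2 * x * t) * t ^ a

/-- `Phi β σh δ c x = F_a(u(x))` with `a = δ/β - 1` and `u(x) = (c - βx)/(√β·σ̂)`. -/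
noncomputable def Phi (β σh δ c : ℝ) (x : ℝ) : ℝ :=
  Fa (δ / β - 1) ((c - β * x) / (Real.sqrt β * σh))

/-- `M₁ = (f·Φ' - f'·Φ)/D` with `D = (Φ')² - Φ·Φ''`. -/
noncomputable def M1 (β σh δ c : ℝ) (f : ℝ → ℝ) (y : ℝ) : ℝ :=
  (f y * deriv (Phi β σh δ c) y - deriv f y * Phi β σh δ c y) /
    ((deriv (Phi β σh δ c) y) ^ 2 - Phi β σh δ c y * deriv (deriv (Phi β σh δ c)) y)

/-- `M₂ = (f'·Φ' - f·Φ'')/D` with `D = (Φ')² - Φ·Φ''`. -/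
noncomputable def M2 (β σh δ c : ℝ) (f : ℝ → ℝ) (y : ℝ) : ℝ :=
  (deriv f y * deriv (Phi β σh δ c) y - f y * deriv (deriv (Phi β σh δ c)) y) /
    ((deriv (Phi β σh δ c) y) ^ 2 - Phi β σh δ c y * deriv (deriv (Phi β σh δ c)) y)

/-! ### Auxiliary lemmas about `Fa` -/

open Metric
open scoped ENNReal

lemma expbound {x R t : ℝ} (hx : |x| ≤ R) (ht : 0 < t) :
    Real.exp (-(t ^ 2) - 2 * x * t) ≤ Real.exp (2 * R ^ 2) * Real.exp (-(1/2) * t ^ 2) := by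
  rw [← Real.exp_add]
  apply Real.exp_le_exp.2
  have h1 : -R ≤ x := (abs_le.1 hx).1
  nlinarith [sq_nonneg (t - 2*R), mul_le_mul_of_nonneg_right h1 (le_of_lt ht)]

lemma Fa_integrable {a : ℝ} (ha : -1 < a) (x : ℝ) :
    IntegrableOn (fun t : ℝ => Real.exp (-(t ^ 2) - 2 * x * t) * t ^ a) (Set.Ioi 0) := by
  have hdom : IntegrableOn (fun t : ℝ => Real.exp (2 * |x| ^ 2) * (t ^ a * Real.exp (-(1/2) * t ^ 2)))
      (Set.Ioi 0) := (integrableOn_rpow_mul_exp_neg_mul_sq (by norm_num) ha).const_mul _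
  apply hdom.mono' (Measurable.aestronglyMeasurable (by fun_prop))
  rw [ae_restrict_iff' measurableSet_Ioi]
  filter_upwards with t ht
  have ht' : (0:ℝ) < t := ht
  have h1 : (0:ℝ) ≤ t ^ a := Real.rpow_nonneg ht'.le a
  rw [Real.norm_eq_abs, abs_mul, abs_of_nonneg (Real.exp_pos _).le, abs_of_nonneg h1]
  calc Real.exp (-(t ^ 2) - 2 * x * t) * t ^ a
      ≤ (Real.exp (2 * |x| ^ 2) * Real.exp (-(1/2) * t ^ 2)) * t ^ a :=
        mul_le_mul_of_nonneg_right (expbound le_rfl ht') h1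
    _ = Real.exp (2 * |x| ^ 2) * (t ^ a * Real.exp (-(1/2) * t ^ 2)) := by ring

lemma Fa_hasDerivAt {a : ℝ} (ha : -1 < a) (x₀ : ℝ) :
    HasDerivAt (Fa a) (-2 * Fa (a + 1) x₀) x₀ := by
  have ha1 : (-1:ℝ) < a + 1 := by linarith
  set R := |x₀| + 1 with hR
  have key := hasDerivAt_integral_of_dominated_loc_of_deriv_le
    (F := fun x t => Real.exp (-(t ^ 2) - 2 * x * t) * t ^ a)
    (F' := fun x t => (-2) * (Real.exp (-(t ^ 2) - 2 * x * t) * t ^ (a + 1)))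
    (μ := volume.restrict (Set.Ioi 0)) (x₀ := x₀)
    (bound := fun t => 2 * Real.exp (2 * R ^ 2) * (t ^ (a+1) * Real.exp (-(1/2) * t ^ 2)))
    (s := Metric.ball x₀ 1) (Metric.ball_mem_nhds x₀ one_pos)
    (Filter.Eventually.of_forall fun x => (Measurable.aestronglyMeasurable (by fun_prop)))
    (Fa_integrable ha x₀)
    (Measurable.aestronglyMeasurable (by fun_prop))
    ?_ ?_ ?_
  · have : (∫ t in Set.Ioi (0:ℝ), (-2) * (Real.exp (-(t ^ 2) - 2 * x₀ * t) * t ^ (a + 1)))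
        = -2 * Fa (a+1) x₀ := by
      rw [Fa, integral_const_mul]
    exact this ▸ key.2
  · rw [ae_restrict_iff' measurableSet_Ioi]
    filter_upwards with t ht x hx
    have ht' : (0:ℝ) < t := ht
    have hxR : |x| ≤ R := by
      have h1 := mem_ball_iff_norm.1 hx
      rw [Real.norm_eq_abs] at h1
      have h2 := abs_sub_abs_le_abs_sub x x₀
      rw [hR]; linarith
    have h1 : (0:ℝ) ≤ t ^ (a+1) := Real.rpow_nonneg ht'.le _
    rw [Real.norm_eq_abs, abs_mul, abs_mul, abs_of_nonneg (Real.exp_pos _).le, abs_of_nonneg h1]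
    have habs : |(-2:ℝ)| = 2 := by norm_num
    rw [habs]
    have hb := mul_le_mul_of_nonneg_right (expbound hxR ht') h1
    nlinarith [hb]
  · exact (integrableOn_rpow_mul_exp_neg_mul_sq (by norm_num) ha1).const_mul _
  · rw [ae_restrict_iff' measurableSet_Ioi]
    filter_upwards with t ht x hx
    have ht' : (0:ℝ) < t := ht
    have h : HasDerivAt (fun x : ℝ => -(t ^ 2) - 2 * x * t) (-(2*t)) x := by
      have h0 : HasDerivAt (fun x : ℝ => 2 * x * t) (2 * t) x := by
        simpa using ((hasDerivAt_id x).const_mul 2).mul_const t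
      exact ((hasDerivAt_const x (-(t^2))).sub h0).congr_deriv (by ring)
    have h2 := (h.exp.mul_const (t ^ a))
    refine h2.congr_deriv ?_
    rw [Real.rpow_add_one (ne_of_gt ht')]
    ring

lemma Fa_pos {a : ℝ} (ha : -1 < a) (x : ℝ) : 0 < Fa a x := by
  rw [Fa, setIntegral_pos_iff_support_of_nonneg_ae ?_ (Fa_integrable ha x)]
  · have hsub : Set.Ioi (0:ℝ) ⊆ Function.support (fun t : ℝ => Real.exp (-(t ^ 2) - 2 * x * t) * t ^ a) ∩ Set.Ioi 0 := by
      intro t ht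
      refine ⟨?_, ht⟩
      have ht' : (0:ℝ) < t := ht
      exact (mul_pos (Real.exp_pos _) (Real.rpow_pos_of_pos ht' a)).ne'
    calc (0:ℝ≥0∞) < volume (Set.Ioi (0:ℝ)) := by simp
      _ ≤ _ := measure_mono hsub
  · rw [EventuallyLE, ae_restrict_iff' measurableSet_Ioi]
    filter_upwards with t ht
    have ht' : (0:ℝ) < t := ht
    positivity

lemma Fa_sq_lt {a : ℝ} (ha : -1 < a) (x : ℝ) :
    Fa (a + 1) x ^ 2 < Fa a x * Fa (a + 2) x := by
  have ha1 : (-1:ℝ) < a + 1 := by linarith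
  have ha2 : (-1:ℝ) < a + 2 := by linarith
  have h0 := Fa_pos ha x
  set l : ℝ := Fa (a+1) x / Fa a x with hl
  have hint2 := Fa_integrable ha2 x
  have hint1 := Fa_integrable ha1 x
  have hint0 := Fa_integrable ha x
  have hm1 : IntegrableOn (fun t : ℝ => 2*l * (Real.exp (-(t ^ 2) - 2 * x * t) * t ^ (a+1)))
      (Set.Ioi 0) := hint1.const_mul _
  have hm0 : IntegrableOn (fun t : ℝ => l^2 * (Real.exp (-(t ^ 2) - 2 * x * t) * t ^ a))
      (Set.Ioi 0) := hint0.const_mul _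
  have hsub : IntegrableOn (fun t : ℝ => Real.exp (-(t ^ 2) - 2 * x * t) * t ^ (a+2)
      - 2*l * (Real.exp (-(t ^ 2) - 2 * x * t) * t ^ (a+1))) (Set.Ioi 0) := hint2.sub hm1
  have heq : ∀ t ∈ Set.Ioi (0:ℝ),
      Real.exp (-(t ^ 2) - 2 * x * t) * t ^ a * (t - l) ^ 2
      = Real.exp (-(t ^ 2) - 2 * x * t) * t ^ (a+2)
        - 2*l * (Real.exp (-(t ^ 2) - 2 * x * t) * t ^ (a+1))
        + l^2 * (Real.exp (-(t ^ 2) - 2 * x * t) * t ^ a) := by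
    intro t ht
    have ht' : (0:ℝ) < t := ht
    have e1 : t ^ (a+1) = t ^ a * t := Real.rpow_add_one (ne_of_gt ht') a
    have e2 : t ^ (a+2) = t ^ (a+1) * t := by
      have h := Real.rpow_add_one (ne_of_gt ht') (a+1)
      rw [show a + 1 + 1 = a + 2 by ring] at h; exact h
    rw [e2, e1]; ring
  have hIint : IntegrableOn
      (fun t : ℝ => Real.exp (-(t ^ 2) - 2 * x * t) * t ^ a * (t - l) ^ 2) (Set.Ioi 0) := by
    apply (hsub.add hm0).congr
    rw [Filter.EventuallyEq, ae_restrict_iff' measurableSet_Ioi]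
    filter_upwards with t ht
    exact (heq t ht).symm
  have hIval : (∫ t in Set.Ioi (0:ℝ), Real.exp (-(t ^ 2) - 2 * x * t) * t ^ a * (t - l) ^ 2)
      = Fa (a+2) x - 2*l*Fa (a+1) x + l^2 * Fa a x := by
    rw [setIntegral_congr_fun measurableSet_Ioi heq, integral_add hsub hm0,
      integral_sub hint2 hm1, integral_const_mul, integral_const_mul]
    simp [Fa]
  have hIpos : 0 < ∫ t in Set.Ioi (0:ℝ), Real.exp (-(t ^ 2) - 2 * x * t) * t ^ a * (t - l) ^ 2 := by
    rw [setIntegral_pos_iff_support_of_nonneg_ae ?_ hIint]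
    · have hsub2 : Set.Ioi (0:ℝ) \ {l} ⊆
          Function.support (fun t : ℝ => Real.exp (-(t ^ 2) - 2 * x * t) * t ^ a * (t - l) ^ 2)
            ∩ Set.Ioi 0 := by
        rintro t ⟨ht, htl⟩
        have ht' : (0:ℝ) < t := ht
        have hne : t - l ≠ 0 := sub_ne_zero.2 htl
        refine ⟨?_, ht⟩
        exact (mul_pos (mul_pos (Real.exp_pos _) (Real.rpow_pos_of_pos ht' a))
          (by positivity)).ne'
      have hpos : (0:ℝ≥0∞) < volume (Set.Ioi (0:ℝ) \ {l}) := by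
        rw [measure_diff_null (measure_singleton l)]; simp
      exact hpos.trans_le (measure_mono hsub2)
    · rw [EventuallyLE, ae_restrict_iff' measurableSet_Ioi]
      filter_upwards with t ht
      have ht' : (0:ℝ) < t := ht
      positivity
  rw [hIval] at hIpos
  set A := Fa a x
  set B := Fa (a+1) x
  set C := Fa (a+2) x
  have h2 : C - 2*l*B + l^2*A = (A*C - B^2)/A := by
    rw [hl]; field_simp; ring
  rw [h2] at hIpos
  rcases div_pos_iff.1 hIpos with ⟨h3, _⟩ | ⟨_, h4⟩
  · linarith
  · linarith

/-! ### Derivatives of `Phi` -/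

/-- `PhiD n` is the `n`-th derivative of `Phi`. -/
noncomputable def PhiD (β σh δ c : ℝ) (n : ℕ) (x : ℝ) : ℝ :=
  (2 * β / (Real.sqrt β * σh)) ^ n * Fa (δ / β - 1 + n) ((c - β * x) / (Real.sqrt β * σh))

lemma PhiD_hasDerivAt {β σh δ : ℝ} (c : ℝ) (hβ : 0 < β) (hσ : 0 < σh) (hδ : 0 < δ)
    (n : ℕ) (x : ℝ) :
    HasDerivAt (PhiD β σh δ c n) (PhiD β σh δ c (n+1) x) x := by
  have hs : 0 < Real.sqrt β * σh := mul_pos (Real.sqrt_pos.2 hβ) hσ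
  have ha : (-1:ℝ) < δ/β - 1 + n := by
    have h1 : 0 < δ/β := div_pos hδ hβ
    have h2 : (0:ℝ) ≤ n := Nat.cast_nonneg n
    linarith
  have hu : HasDerivAt (fun x : ℝ => (c - β*x)/(Real.sqrt β * σh))
      ((0 - β * 1)/(Real.sqrt β * σh)) x :=
    ((hasDerivAt_const x c).sub ((hasDerivAt_id x).const_mul β)).div_const (Real.sqrt β * σh)
  have h := (Fa_hasDerivAt ha ((c - β*x)/(Real.sqrt β * σh))).comp x hu
  have h2 := HasDerivAt.const_mul ((2*β/(Real.sqrt β * σh))^n) h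
  have hval : ((2*β/(Real.sqrt β * σh))^n) *
      (-2 * Fa (δ/β - 1 + ↑n + 1) ((c - β*x)/(Real.sqrt β * σh)) * ((0 - β * 1)/(Real.sqrt β * σh)))
      = PhiD β σh δ c (n+1) x := by
    rw [PhiD, pow_succ]
    push_cast
    ring
  rw [← hval]
  exact h2

lemma PhiD_deriv {β σh δ : ℝ} (c : ℝ) (hβ : 0 < β) (hσ : 0 < σh) (hδ : 0 < δ) (n : ℕ) :
    deriv (PhiD β σh δ c n) = PhiD β σh δ c (n+1) :=
  funext fun x => (PhiD_hasDerivAt c hβ hσ hδ n x).deriv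

lemma PhiD_differentiable {β σh δ : ℝ} (c : ℝ) (hβ : 0 < β) (hσ : 0 < σh) (hδ : 0 < δ) (n : ℕ) :
    Differentiable ℝ (PhiD β σh δ c n) :=
  fun x => (PhiD_hasDerivAt c hβ hσ hδ n x).differentiableAt

lemma Phi_eq_PhiD (β σh δ c : ℝ) : Phi β σh δ c = PhiD β σh δ c 0 := by
  funext x
  simp [Phi, PhiD]

lemma D_neg {β σh δ : ℝ} (c : ℝ) (hβ : 0 < β) (hσ : 0 < σh) (hδ : 0 < δ) (y : ℝ) :
    PhiD β σh δ c 1 y ^ 2 - PhiD β σh δ c 0 y * PhiD β σh δ c 2 y < 0 := by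
  have hs : 0 < Real.sqrt β * σh := mul_pos (Real.sqrt_pos.2 hβ) hσ
  have hK : 0 < 2*β/(Real.sqrt β * σh) := by positivity
  have ha : (-1:ℝ) < δ/β - 1 := by
    have h1 : 0 < δ/β := div_pos hδ hβ
    linarith
  have hCS := Fa_sq_lt ha ((c - β*y)/(Real.sqrt β * σh))
  have hK2 : 0 < (2*β/(Real.sqrt β * σh))^2 := by positivity
  rw [PhiD, PhiD, PhiD]
  push_cast
  rw [pow_zero, pow_one, one_mul, add_zero]
  nlinarith [mul_lt_mul_of_pos_left hCS hK2]

/-- For twice continuously differentiable `f`, the identity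
`Φ(y)·M₂'(y) + Φ'(y)·M₁'(y) = 0` holds for all `y`. -/
theorem M1_M2_derivative_identity (β σh δ c : ℝ) (hβ : 0 < β) (hσ : 0 < σh) (hδ : 0 < δ)
    (f : ℝ → ℝ) (hf : ContDiff ℝ 2 f) :
    Differentiable ℝ (M1 β σh δ c f) ∧ Differentiable ℝ (M2 β σh δ c f) ∧
    ∀ y : ℝ, Phi β σh δ c y * deriv (M2 β σh δ c f) y
      + deriv (Phi β σh δ c) y * deriv (M1 β σh δ c f) y = 0 := by
  -- notation
  set P0 := PhiD β σh δ c 0 with hP0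
  set P1 := PhiD β σh δ c 1 with hP1
  set P2 := PhiD β σh δ c 2 with hP2
  set P3 := PhiD β σh δ c 3 with hP3
  have hPhi0 : Phi β σh δ c = P0 := Phi_eq_PhiD β σh δ c
  have hPhi1 : deriv (Phi β σh δ c) = P1 := by
    rw [hPhi0, hP0, PhiD_deriv c hβ hσ hδ 0]
  have hPhi2 : deriv (deriv (Phi β σh δ c)) = P2 := by
    rw [hPhi1, hP1, PhiD_deriv c hβ hσ hδ 1]
  have hd0 : Differentiable ℝ P0 := PhiD_differentiable c hβ hσ hδ 0
  have hd1 : Differentiable ℝ P1 := PhiD_differentiable c hβ hσ hδ 1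
  have hd2 : Differentiable ℝ P2 := PhiD_differentiable c hβ hσ hδ 2
  have hD0 : deriv P0 = P1 := PhiD_deriv c hβ hσ hδ 0
  have hD1 : deriv P1 = P2 := PhiD_deriv c hβ hσ hδ 1
  have hD2 : deriv P2 = P3 := PhiD_deriv c hβ hσ hδ 2
  -- f facts
  have hf1 : Differentiable ℝ f := hf.differentiable (by norm_num)
  have hf' : Differentiable ℝ (deriv f) := by
    have h2 : ContDiff ℝ (2:ℕ) f := by exact_mod_cast hf
    rw [show ((2:ℕ):WithTop ℕ∞) = (1:ℕ) + 1 by norm_cast] at h2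
    exact (contDiff_succ_iff_deriv.mp h2).2.2.differentiable (by norm_num)
  -- the denominator
  set D : ℝ → ℝ := fun y => P1 y ^ 2 - P0 y * P2 y with hD
  have hDneg : ∀ y, D y < 0 := fun y => D_neg c hβ hσ hδ y
  have hDne : ∀ y, D y ≠ 0 := fun y => (hDneg y).ne
  have hDdiff : Differentiable ℝ D := by
    apply Differentiable.sub
    · exact (hd1.pow 2)
    · exact hd0.mul hd2
  -- rewrite M1 and M2
  have hM1 : M1 β σh δ c f = fun y => (f y * P1 y - deriv f y * P0 y) / D y := by
    funext y
    rw [M1, hPhi2, hPhi1, hPhi0]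
  have hM2 : M2 β σh δ c f = fun y => (deriv f y * P1 y - f y * P2 y) / D y := by
    funext y
    rw [M2, hPhi2, hPhi1, hPhi0]
  have hM1diff : Differentiable ℝ (M1 β σh δ c f) := by
    rw [hM1]
    exact ((hf1.mul hd1).sub (hf'.mul hd0)).div hDdiff hDne
  have hM2diff : Differentiable ℝ (M2 β σh δ c f) := by
    rw [hM2]
    exact ((hf'.mul hd1).sub (hf1.mul hd2)).div hDdiff hDne
  refine ⟨hM1diff, hM2diff, fun y => ?_⟩
  -- pointwise key identities
  have key1 : ∀ z, M1 β σh δ c f z * P1 z + M2 β σh δ c f z * P0 z = f z := by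
    intro z
    rw [hM1, hM2]
    have := hDne z
    rw [hD] at this
    field_simp [hD]
    simp only [hD] at *
    field_simp
    ring
  have key2 : ∀ z, M1 β σh δ c f z * P2 z + M2 β σh δ c f z * P1 z = deriv f z := by
    intro z
    rw [hM1, hM2]
    have := hDne z
    rw [hD] at this
    field_simp [hD]
    simp only [hD] at *
    field_simp
    ring
  -- differentiate key1
  have hfun : (fun z => M1 β σh δ c f z * P1 z + M2 β σh δ c f z * P0 z) = f :=
    funext key1
  have hHD : HasDerivAt (fun z => M1 β σh δ c f z * P1 z + M2 β σh δ c f z * P0 z)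
      (deriv (M1 β σh δ c f) y * P1 y + M1 β σh δ c f y * P2 y
        + (deriv (M2 β σh δ c f) y * P0 y + M2 β σh δ c f y * P1 y)) y := by
    have h1 : HasDerivAt (M1 β σh δ c f) (deriv (M1 β σh δ c f) y) y :=
      (hM1diff y).hasDerivAt
    have h2 : HasDerivAt (M2 β σh δ c f) (deriv (M2 β σh δ c f) y) y :=
      (hM2diff y).hasDerivAt
    have h3 : HasDerivAt P1 (P2 y) y := by
      have := PhiD_hasDerivAt c hβ hσ hδ 1 y
      exact this
    have h4 : HasDerivAt P0 (P1 y) y := PhiD_hasDerivAt c hβ hσ hδ 0 y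
    exact (h1.mul h3).add (h2.mul h4)
  rw [hfun] at hHD
  have hder : deriv (M1 β σh δ c f) y * P1 y + M1 β σh δ c f y * P2 y
      + (deriv (M2 β σh δ c f) y * P0 y + M2 β σh δ c f y * P1 y) = deriv f y := hHD.deriv.symm
  have hk2 := key2 y
  rw [hPhi1, hPhi0]
  linear_combination hder - hk2
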